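/- Normal Pontryagin extremals of the characteristic optimal control problem are its solutions: let Δu be a control, ψ1 ∈ ℝ^m, and define the adjoint curve ψ(t) := ψ1 + ∫_{t0}^{t} W(s)ᵀ·Δu(s) ds. Assume the maximum condition A(t)ᵀ·ψ(t) = W(t)·E(t,Δu) holds for almost every t ∈ [t0,t1]. Then: (a) for every control Δv and every t ∈ [t0,t1], C(t, Δu+Δv) − C(t,Δu) − C(t,Δv) = ⟨E(t,Δv), ψ(t)⟩; and (b) if moreover, for some t ∈ [t0,t1], the set { C(t,w) : w a control with E(t,w) = 0 } is bounded below, then C(t,Δu) ≤ C(t,w) for every control w with E(t,w) = E(t,Δu). (Proposition 4.20 together with Lemma 4.22, part (i), sufficiency direction.) -/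

import Mathlib

open MeasureTheory Set

noncomputable section

/-- A control: a measurable, essentially bounded map `ℝ → ℝ^k`. -/
def IsControl (k : ℕ) (u : ℝ → Fin k → ℝ) : Prop :=
  Measurable u ∧ ∃ C : ℝ, ∀ᵐ t : ℝ, ‖u t‖ ≤ C

/-- The endpoint map `E_a(τ, Δu) = ∫_a^τ A(t) · Δu(t) dt`. -/
def epMap (k m : ℕ) (A : ℝ → Matrix (Fin m) (Fin k) ℝ) (a τ : ℝ)
    (u : ℝ → Fin k → ℝ) : Fin m → ℝ :=
  ∫ t in a..τ, (A t).mulVec (u t)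

/-- The reachable set `R(a,τ)` of the characteristic linear control system. -/
def reach (k m : ℕ) (A : ℝ → Matrix (Fin m) (Fin k) ℝ) (a τ : ℝ) :
    Set (Fin m → ℝ) :=
  { v | ∃ u, IsControl k u ∧ epMap k m A a τ u = v }

/-- The quadratic cost `C_a(τ, Δu) = ∫_a^τ ⟨Δu(t), W(t)·E_a(t,Δu)⟩ dt` of the
characteristic optimal control problem. -/
def cost (k m : ℕ) (A : ℝ → Matrix (Fin m) (Fin k) ℝ)
    (W : ℝ → Matrix (Fin k) (Fin m) ℝ) (a τ : ℝ) (u : ℝ → Fin k → ℝ) : ℝ :=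
  ∫ t in a..τ, dotProduct (u t) ((W t).mulVec (epMap k m A a t u))

/-- The set of costs of controls steering the system from `0` at time `a`
to `v` at time `τ`. -/
def costSet (k m : ℕ) (A : ℝ → Matrix (Fin m) (Fin k) ℝ)
    (W : ℝ → Matrix (Fin k) (Fin m) ℝ) (a τ : ℝ) (v : Fin m → ℝ) : Set ℝ :=
  { c | ∃ u, IsControl k u ∧ epMap k m A a τ u = v ∧ cost k m A W a τ u = c }


lemma primitive_abs_bound {a b : ℝ} {g : ℝ → ℝ} (hg : IntegrableOn g (Ioc a b)) :
    ∀ s ∈ Ioc a b, |∫ r in Ioc a s, g r| ≤ ∫ r in Ioc a b, |g r| := by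
  intro s hs
  calc |∫ r in Ioc a s, g r| ≤ ∫ r in Ioc a s, |g r| := by
        simpa using norm_integral_le_integral_norm (μ := volume.restrict (Ioc a s)) g
    _ ≤ ∫ r in Ioc a b, |g r| := by
        apply setIntegral_mono_set hg.abs
        · filter_upwards with r using abs_nonneg _
        · exact HasSubset.Subset.eventuallyLE (Ioc_subset_Ioc le_rfl hs.2)

lemma integrableOn_mul_primitive {a b : ℝ} {f g : ℝ → ℝ}
    (hf : IntegrableOn f (Ioc a b)) (hg : IntegrableOn g (Ioc a b)) :
    IntegrableOn (fun s => f s * ∫ r in Ioc a s, g r) (Ioc a b) := by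
  have hcont : ContinuousOn (fun s => ∫ r in Ioc a s, g r) (Icc a b) :=
    intervalIntegral.continuousOn_primitive ((integrableOn_Icc_iff_integrableOn_Ioc (by simp)).2 hg)
  have hmeas : AEStronglyMeasurable (fun s => ∫ r in Ioc a s, g r)
      (volume.restrict (Ioc a b)) := by
    apply (hcont.mono Ioc_subset_Icc_self).aestronglyMeasurable measurableSet_Ioc
  have hbd : ∀ᵐ s ∂(volume.restrict (Ioc a b)),
      ‖∫ r in Ioc a s, g r‖ ≤ ∫ r in Ioc a b, |g r| := by
    rw [ae_restrict_iff' measurableSet_Ioc]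
    filter_upwards with s hs
    simpa [Real.norm_eq_abs] using primitive_abs_bound hg s hs
  exact Integrable.mul_bdd hf hmeas hbd

lemma diag_indicator_integral_zero {a b : ℝ} (G : ℝ × ℝ → ℝ) :
    ∫ p, ({q : ℝ × ℝ | q.1 = q.2}.indicator G) p
      ∂((volume.restrict (Ioc a b)).prod (volume.restrict (Ioc a b))) = 0 := by
  set ν := volume.restrict (Ioc a b)
  have hD : MeasurableSet {q : ℝ × ℝ | q.1 = q.2} :=
    measurableSet_eq_fun measurable_fst measurable_snd
  have hz : (ν.prod ν) {q : ℝ × ℝ | q.1 = q.2} = 0 := by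
    rw [Measure.prod_apply hD]
    have : ∀ x : ℝ, ν (Prod.mk x ⁻¹' {q : ℝ × ℝ | q.1 = q.2}) = 0 := by
      intro x
      have : Prod.mk x ⁻¹' {q : ℝ × ℝ | q.1 = q.2} = {x} := by
        ext y; simp [eq_comm]
      rw [this, Measure.restrict_apply (measurableSet_singleton x)]
      exact measure_mono_null inter_subset_left (measure_singleton x)
    simp [this]
  rw [integral_indicator hD, Measure.restrict_eq_zero.2 hz]
  exact integral_zero_measure _

lemma integral_mul_primitive_add {a b : ℝ} {f g : ℝ → ℝ}
    (hf : IntegrableOn f (Ioc a b)) (hg : IntegrableOn g (Ioc a b)) :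
    (∫ s in Ioc a b, f s * ∫ r in Ioc a s, g r) +
      (∫ s in Ioc a b, g s * ∫ r in Ioc a s, f r)
      = (∫ s in Ioc a b, f s) * ∫ s in Ioc a b, g s := by
  set ν := volume.restrict (Ioc a b) with hν
  set G : ℝ × ℝ → ℝ := fun p => f p.1 * g p.2 with hGdef
  have hG : Integrable G (ν.prod ν) := hf.mul_prod hg
  set D : Set (ℝ × ℝ) := {p : ℝ × ℝ | p.2 ≤ p.1} with hDdef
  have hD : MeasurableSet D := measurableSet_le measurable_snd measurable_fst
  have key : ∀ F K : ℝ → ℝ, IntegrableOn F (Ioc a b) → IntegrableOn K (Ioc a b) →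
      (∫ s in Ioc a b, F s * ∫ r in Ioc a s, K r)
        = ∫ p, D.indicator (fun p : ℝ × ℝ => F p.1 * K p.2) p ∂(ν.prod ν) := by
    intro F K hF hK
    have hGK : Integrable (fun p : ℝ × ℝ => F p.1 * K p.2) (ν.prod ν) := hF.mul_prod hK
    have hind : Integrable (D.indicator fun p : ℝ × ℝ => F p.1 * K p.2) (ν.prod ν) :=
      hGK.indicator hD
    rw [MeasureTheory.integral_prod _ hind]
    apply setIntegral_congr_fun measurableSet_Ioc
    intro s hs
    have h1 : ∀ r : ℝ, D.indicator (fun p : ℝ × ℝ => F p.1 * K p.2) (s, r)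
        = (Iic s).indicator (fun r => F s * K r) r := by
      intro r
      by_cases h : r ≤ s <;> simp [hDdef, Set.indicator, h]
    simp only [h1]
    rw [integral_indicator measurableSet_Iic, hν, Measure.restrict_restrict measurableSet_Iic]
    have h2 : Iic s ∩ Ioc a b = Ioc a s := by
      ext r
      simp only [mem_inter_iff, mem_Iic, mem_Ioc]
      exact ⟨fun h => ⟨h.2.1, h.1⟩, fun h => ⟨h.2, h.1, h.2.trans hs.2⟩⟩
    rw [h2, integral_const_mul]
  have T1 := key f g hf hg
  have T2 := key g f hg hf
  set D' : Set (ℝ × ℝ) := {p : ℝ × ℝ | p.1 ≤ p.2} with hD'def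
  have hD' : MeasurableSet D' := measurableSet_le measurable_fst measurable_snd
  have hswap : (∫ p, D.indicator (fun p : ℝ × ℝ => g p.1 * f p.2) p ∂(ν.prod ν))
      = ∫ p, D'.indicator G p ∂(ν.prod ν) := by
    rw [← integral_prod_swap (D.indicator fun p : ℝ × ℝ => g p.1 * f p.2)]
    apply integral_congr_ae
    filter_upwards with p
    by_cases h : p.1 ≤ p.2 <;>
      simp [hDdef, hD'def, hGdef, Set.indicator, Prod.swap, h, mul_comm]
  rw [T1, T2, hswap, ← integral_add (hG.indicator hD) (hG.indicator hD')]
  have hdiag : MeasurableSet {q : ℝ × ℝ | q.1 = q.2} :=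
    measurableSet_eq_fun measurable_fst measurable_snd
  have hsum : ∀ p : ℝ × ℝ, D.indicator G p + D'.indicator G p
      = G p + ({q : ℝ × ℝ | q.1 = q.2}).indicator G p := by
    intro p
    rcases lt_trichotomy p.1 p.2 with h | h | h
    · simp [hDdef, hD'def, Set.indicator, not_le.2 h, h.le, h.ne]
    · simp [hDdef, hD'def, Set.indicator, h, le_of_eq h]
    · simp [hDdef, hD'def, Set.indicator, not_le.2 h, h.le, h.ne']
  simp only [hsum]
  rw [integral_add hG (hG.indicator hdiag), diag_indicator_integral_zero, add_zero, hGdef]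
  exact integral_prod_mul f g

-- basic norm bounds
lemma abs_dot_le {n : ℕ} (x y : Fin n → ℝ) :
    |dotProduct x y| ≤ n * (‖x‖ * ‖y‖) := by
  calc |dotProduct x y| ≤ ∑ j : Fin n, |x j * y j| :=
        Finset.abs_sum_le_sum_abs _ _
    _ ≤ ∑ _j : Fin n, ‖x‖ * ‖y‖ := by
        refine Finset.sum_le_sum fun j _ => ?_
        rw [abs_mul]
        exact mul_le_mul (by simpa using norm_le_pi_norm x j)
          (by simpa using norm_le_pi_norm y j) (abs_nonneg _) (norm_nonneg _)
    _ = n * (‖x‖ * ‖y‖) := by simp [mul_comm]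

lemma mulVec_norm_bound {p q : ℕ} (M : Matrix (Fin p) (Fin q) ℝ) (C : ℝ) (hC : 0 ≤ C)
    (hM : ∀ i j, |M i j| ≤ C) (y : Fin q → ℝ) :
    ‖M.mulVec y‖ ≤ q * C * ‖y‖ := by
  rw [pi_norm_le_iff_of_nonneg (by positivity)]
  intro i
  calc ‖M.mulVec y i‖ = |dotProduct (M i) y| := by
        simp [Matrix.mulVec, Real.norm_eq_abs]
    _ ≤ ∑ j : Fin q, |M i j * y j| := Finset.abs_sum_le_sum_abs _ _
    _ ≤ ∑ _j : Fin q, C * ‖y‖ := by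
        refine Finset.sum_le_sum fun j _ => ?_
        rw [abs_mul]
        exact mul_le_mul (hM i j) (by simpa using norm_le_pi_norm y j)
          (abs_nonneg _) hC
    _ = q * C * ‖y‖ := by simp; ring

lemma mulVec_ctrl_measurable {p q : ℕ} (M : ℝ → Matrix (Fin p) (Fin q) ℝ)
    (hM : ∀ i j, Measurable fun t => M t i j) (u : ℝ → Fin q → ℝ) (hu : Measurable u) :
    Measurable (fun s => (M s).mulVec (u s)) := by
  apply measurable_pi_lambda
  intro i
  simp only [Matrix.mulVec, dotProduct]
  exact Finset.measurable_sum _ fun j _ => (hM i j).mul ((measurable_pi_apply j).comp hu)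

lemma integrableOn_of_bound' {E : Type*} [NormedAddCommGroup E] {t0 t1 a b B : ℝ}
    {h : ℝ → E} (hm : AEStronglyMeasurable h (volume.restrict (Ioc a b)))
    (hb : ∀ᵐ s : ℝ, s ∈ Icc t0 t1 → ‖h s‖ ≤ B) (hsub : Ioc a b ⊆ Icc t0 t1) :
    IntegrableOn h (Ioc a b) := by
  refine Integrable.mono' (g := fun _ => B) ?_ hm ?_
  · exact integrableOn_const measure_Ioc_lt_top.ne
  · rw [ae_restrict_iff' measurableSet_Ioc]
    filter_upwards [hb] with s hs hmem
    exact hs (hsub hmem)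

/-- integrability of `s ↦ M s ·ᵥ u s` for a control `u` and bounded measurable `M`. -/
lemma mulVec_ctrl_integrableOn {p q : ℕ} {t0 t1 a b : ℝ}
    (M : ℝ → Matrix (Fin p) (Fin q) ℝ)
    (hM : ∀ i j, Measurable fun t => M t i j)
    (CM : ℝ) (hCM : ∀ t ∈ Icc t0 t1, ∀ i j, |M t i j| ≤ CM)
    (u : ℝ → Fin q → ℝ) (hu : IsControl q u)
    (hsub : Ioc a b ⊆ Icc t0 t1) :
    IntegrableOn (fun s => (M s).mulVec (u s)) (Ioc a b) := by
  obtain ⟨hum, Cu, hub⟩ := hu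
  refine integrableOn_of_bound' (t0 := t0) (t1 := t1)
    (B := q * max CM 0 * max Cu 0)
    ((mulVec_ctrl_measurable M hM u hum).aestronglyMeasurable.restrict) ?_ hsub
  filter_upwards [hub] with s hsu hmem
  calc ‖(M s).mulVec (u s)‖ ≤ q * max CM 0 * ‖u s‖ :=
        mulVec_norm_bound _ _ (le_max_right _ _)
          (fun i j => (hCM s hmem i j).trans (le_max_left _ _)) _
    _ ≤ q * max CM 0 * max Cu 0 := by
        refine mul_le_mul_of_nonneg_left (hsu.trans (le_max_left _ _)) ?_
        positivity

lemma integral_pi_apply {n : ℕ} {μ : Measure ℝ} {h : ℝ → Fin n → ℝ}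
    (hi : Integrable h μ) (j : Fin n) :
    (∫ x, h x ∂μ) j = ∫ x, h x j ∂μ := by
  have := (ContinuousLinearMap.proj (R := ℝ) (φ := fun _ : Fin n => ℝ) j).integral_comp_comm hi
  simpa using this.symm

lemma integrable_pi_apply {n : ℕ} {μ : Measure ℝ} {h : ℝ → Fin n → ℝ}
    (hi : Integrable h μ) (j : Fin n) :
    Integrable (fun x => h x j) μ := by
  have := (ContinuousLinearMap.proj (R := ℝ) (φ := fun _ : Fin n => ℝ) j).integrable_comp hi
  simpa using this

lemma ep_apply {k m : ℕ} {A : ℝ → Matrix (Fin m) (Fin k) ℝ} {a τ : ℝ} (haτ : a ≤ τ)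
    {v : ℝ → Fin k → ℝ} (hint : IntegrableOn (fun s => (A s).mulVec (v s)) (Ioc a τ))
    (j : Fin m) :
    epMap k m A a τ v j = ∫ s in Ioc a τ, (A s).mulVec (v s) j := by
  unfold epMap
  rw [intervalIntegral.integral_of_le haτ]
  exact integral_pi_apply hint j

lemma epMap_continuousOn {k m : ℕ} {t0 t1 : ℝ} {A : ℝ → Matrix (Fin m) (Fin k) ℝ}
    {v : ℝ → Fin k → ℝ}
    (hint : IntegrableOn (fun s => (A s).mulVec (v s)) (Icc t0 t1)) :
    ContinuousOn (fun s => epMap k m A t0 s v) (Icc t0 t1) := by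
  apply continuousOn_pi.2
  intro j
  have hcomp : IntegrableOn (fun r => (A r).mulVec (v r) j) (Icc t0 t1) :=
    integrable_pi_apply hint j
  refine (intervalIntegral.continuousOn_primitive hcomp).congr fun s hs => ?_
  exact ep_apply hs.1 (hint.mono_set (fun r hr => ⟨hr.1.le, hr.2.trans hs.2⟩)) j

lemma cost_integrand_integrableOn {k m : ℕ} {t0 t1 a b : ℝ}
    {W : ℝ → Matrix (Fin k) (Fin m) ℝ}
    (hWmeas : ∀ i j, Measurable fun t => W t i j)
    (CW : ℝ) (hCW : ∀ t ∈ Icc t0 t1, ∀ i j, |W t i j| ≤ CW)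
    {u : ℝ → Fin k → ℝ} (hu : IsControl k u)
    {Eb : ℝ → Fin m → ℝ} (hEb : ContinuousOn Eb (Icc t0 t1))
    (hsub : Ioc a b ⊆ Icc t0 t1) :
    IntegrableOn (fun s => dotProduct (u s) ((W s).mulVec (Eb s))) (Ioc a b) := by
  obtain ⟨hum, Cu, hub⟩ := hu
  obtain ⟨CE, hCE⟩ := isCompact_Icc.exists_bound_of_continuousOn hEb
  have h1 : AEStronglyMeasurable Eb (volume.restrict (Ioc a b)) :=
    (hEb.mono hsub).aestronglyMeasurable measurableSet_Ioc
  have hmeas : AEStronglyMeasurable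
      (fun s => dotProduct (u s) ((W s).mulVec (Eb s)))
      (volume.restrict (Ioc a b)) := by
    simp only [dotProduct, Matrix.mulVec]
    apply Finset.aestronglyMeasurable_fun_sum
    intro i _
    apply AEStronglyMeasurable.mul
    · exact ((measurable_pi_apply i).comp hum).aestronglyMeasurable.restrict
    · apply Finset.aestronglyMeasurable_fun_sum
      intro j _
      exact ((hWmeas i j).aestronglyMeasurable.restrict).mul
        ((continuous_apply j).comp_aestronglyMeasurable h1)
  refine integrableOn_of_bound' (t0 := t0) (t1 := t1)
    (B := k * (max Cu 0 * (m * max CW 0 * max CE 0))) hmeas ?_ hsub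
  filter_upwards [hub] with s hsu hmem
  have hsu' : ‖u s‖ ≤ max Cu 0 := hsu.trans (le_max_left _ _)
  have h2 : ‖(W s).mulVec (Eb s)‖ ≤ m * max CW 0 * max CE 0 := by
    calc ‖(W s).mulVec (Eb s)‖ ≤ m * max CW 0 * ‖Eb s‖ :=
          mulVec_norm_bound _ _ (le_max_right _ _)
            (fun i j => (hCW s hmem i j).trans (le_max_left _ _)) _
      _ ≤ _ := mul_le_mul_of_nonneg_left ((hCE s hmem).trans (le_max_left _ _))
            (by positivity)
  calc ‖dotProduct (u s) ((W s).mulVec (Eb s))‖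
      ≤ k * (‖u s‖ * ‖(W s).mulVec (Eb s)‖) := by
        rw [Real.norm_eq_abs]; exact abs_dot_le _ _
    _ ≤ k * (max Cu 0 * (m * max CW 0 * max CE 0)) := by
        refine mul_le_mul_of_nonneg_left
          (mul_le_mul hsu' h2 (norm_nonneg _) ((norm_nonneg _).trans hsu')) ?_
        positivity

lemma cost_eq_setIntegral {k m : ℕ} {A : ℝ → Matrix (Fin m) (Fin k) ℝ}
    {W : ℝ → Matrix (Fin k) (Fin m) ℝ} {t0 t : ℝ} (ht0 : t0 ≤ t)
    (u : ℝ → Fin k → ℝ) :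
    cost k m A W t0 t u
      = ∫ s in Ioc t0 t, dotProduct (u s) ((W s).mulVec (epMap k m A t0 s u)) := by
  unfold cost
  rw [intervalIntegral.integral_of_le ht0]

lemma IsControl.add' {k : ℕ} {u v : ℝ → Fin k → ℝ} (hu : IsControl k u)
    (hv : IsControl k v) : IsControl k (u + v) := by
  obtain ⟨hum, Cu, hub⟩ := hu; obtain ⟨hvm, Cv, hvb⟩ := hv
  refine ⟨hum.add hvm, Cu + Cv, ?_⟩
  filter_upwards [hub, hvb] with s h1 h2
  exact (norm_add_le _ _).trans (add_le_add h1 h2)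

lemma IsControl.sub' {k : ℕ} {u v : ℝ → Fin k → ℝ} (hu : IsControl k u)
    (hv : IsControl k v) : IsControl k (u - v) := by
  obtain ⟨hum, Cu, hub⟩ := hu; obtain ⟨hvm, Cv, hvb⟩ := hv
  refine ⟨hum.sub hvm, Cu + Cv, ?_⟩
  filter_upwards [hub, hvb] with s h1 h2
  exact (norm_sub_le _ _).trans (add_le_add h1 h2)

lemma IsControl.smul' {k : ℕ} (c : ℝ) {u : ℝ → Fin k → ℝ} (hu : IsControl k u) :
    IsControl k (c • u) := by
  obtain ⟨hum, Cu, hub⟩ := hu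
  refine ⟨hum.const_smul c, |c| * Cu, ?_⟩
  filter_upwards [hub] with s h1
  rw [Pi.smul_apply, norm_smul, Real.norm_eq_abs]
  exact mul_le_mul_of_nonneg_left h1 (abs_nonneg c)

lemma epMap_add {k m : ℕ} {A : ℝ → Matrix (Fin m) (Fin k) ℝ} {t0 s : ℝ}
    {u v : ℝ → Fin k → ℝ}
    (hiu : IntegrableOn (fun r => (A r).mulVec (u r)) (Ioc t0 s))
    (hiv : IntegrableOn (fun r => (A r).mulVec (v r)) (Ioc t0 s))
    (h : t0 ≤ s) :
    epMap k m A t0 s (u + v) = epMap k m A t0 s u + epMap k m A t0 s v := by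
  unfold epMap
  rw [intervalIntegral.integral_of_le h, intervalIntegral.integral_of_le h,
    intervalIntegral.integral_of_le h, ← integral_add hiu hiv]
  congr 1
  funext r
  simp [Matrix.mulVec_add]

lemma epMap_smul {k m : ℕ} {A : ℝ → Matrix (Fin m) (Fin k) ℝ} {a τ : ℝ}
    (c : ℝ) (v : ℝ → Fin k → ℝ) :
    epMap k m A a τ (c • v) = c • epMap k m A a τ v := by
  unfold epMap
  rw [← intervalIntegral.integral_smul]
  congr 1
  funext r
  simp [Matrix.mulVec_smul]

lemma cost_smul {k m : ℕ} {A : ℝ → Matrix (Fin m) (Fin k) ℝ}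
    {W : ℝ → Matrix (Fin k) (Fin m) ℝ} {a τ : ℝ} (c : ℝ) (v : ℝ → Fin k → ℝ) :
    cost k m A W a τ (c • v) = c ^ 2 * cost k m A W a τ v := by
  unfold cost
  rw [← intervalIntegral.integral_const_mul]
  congr 1
  funext s
  rw [epMap_smul]
  simp only [Pi.smul_apply, Matrix.mulVec_smul, smul_dotProduct,
    dotProduct_smul, smul_eq_mul]
  ring

lemma cross_identity
    (t0 t1 : ℝ) (k m : ℕ)
    (A : ℝ → Matrix (Fin m) (Fin k) ℝ)
    (hAmeas : ∀ i j, Measurable fun t => A t i j)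
    (CA : ℝ) (hCA : ∀ t ∈ Icc t0 t1, ∀ i j, |A t i j| ≤ CA)
    (W : ℝ → Matrix (Fin k) (Fin m) ℝ)
    (hWmeas : ∀ i j, Measurable fun t => W t i j)
    (CW : ℝ) (hCW : ∀ t ∈ Icc t0 t1, ∀ i j, |W t i j| ≤ CW)
    (Δu : ℝ → Fin k → ℝ) (hΔu : IsControl k Δu)
    (ψ1 : Fin m → ℝ) (ψ : ℝ → Fin m → ℝ)
    (hψ : ∀ t : ℝ, ψ t = ψ1 + ∫ s in t0..t, (W s).transpose.mulVec (Δu s))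
    (hmax : ∀ᵐ t : ℝ, t ∈ Icc t0 t1 →
      (A t).transpose.mulVec (ψ t) = (W t).mulVec (epMap k m A t0 t Δu))
    (Δv : ℝ → Fin k → ℝ) (hΔv : IsControl k Δv)
    (t : ℝ) (ht : t ∈ Icc t0 t1) :
    cost k m A W t0 t (Δu + Δv) - cost k m A W t0 t Δu - cost k m A W t0 t Δv
      = dotProduct (epMap k m A t0 t Δv) (ψ t) := by
  have ht0 : t0 ≤ t := ht.1
  have hsub : Ioc t0 t ⊆ Icc t0 t1 := fun s hs => ⟨hs.1.le, hs.2.trans ht.2⟩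
  have hsub' : ∀ s, s ∈ Icc t0 t1 → Ioc t0 s ⊆ Icc t0 t1 :=
    fun s hs r hr => ⟨hr.1.le, hr.2.trans hs.2⟩
  have hWT : ∀ s ∈ Icc t0 t1, ∀ i j, |(W s).transpose i j| ≤ CW :=
    fun s hs i j => hCW s hs j i
  have hWTmeas : ∀ (i : Fin m) (j : Fin k), Measurable fun s => (W s).transpose i j :=
    fun i j => hWmeas j i
  -- integrability of the three driving vector fields
  have hfu : ∀ {a b : ℝ}, Ioc a b ⊆ Icc t0 t1 →
      IntegrableOn (fun s => (A s).mulVec (Δu s)) (Ioc a b) :=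
    fun h => mulVec_ctrl_integrableOn A hAmeas CA hCA Δu hΔu h
  have hfv : ∀ {a b : ℝ}, Ioc a b ⊆ Icc t0 t1 →
      IntegrableOn (fun s => (A s).mulVec (Δv s)) (Ioc a b) :=
    fun h => mulVec_ctrl_integrableOn A hAmeas CA hCA Δv hΔv h
  have hguv : ∀ {a b : ℝ}, Ioc a b ⊆ Icc t0 t1 →
      IntegrableOn (fun s => (W s).transpose.mulVec (Δu s)) (Ioc a b) :=
    fun h => mulVec_ctrl_integrableOn _ hWTmeas CW hWT Δu hΔu h
  have hfuv : ∀ {a b : ℝ}, Ioc a b ⊆ Icc t0 t1 →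
      IntegrableOn (fun s => (A s).mulVec ((Δu + Δv) s)) (Ioc a b) :=
    fun h => mulVec_ctrl_integrableOn A hAmeas CA hCA _ (hΔu.add' hΔv) h
  -- continuity of the endpoint maps
  have hEucont : ContinuousOn (fun s => epMap k m A t0 s Δu) (Icc t0 t1) :=
    epMap_continuousOn ((integrableOn_Icc_iff_integrableOn_Ioc (by simp)).2 (hfu Ioc_subset_Icc_self))
  have hEvcont : ContinuousOn (fun s => epMap k m A t0 s Δv) (Icc t0 t1) :=
    epMap_continuousOn ((integrableOn_Icc_iff_integrableOn_Ioc (by simp)).2 (hfv Ioc_subset_Icc_self))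
  have hEuvcont : ContinuousOn (fun s => epMap k m A t0 s (Δu + Δv)) (Icc t0 t1) :=
    epMap_continuousOn ((integrableOn_Icc_iff_integrableOn_Ioc (by simp)).2 (hfuv Ioc_subset_Icc_self))
  -- integrability of the four cost integrands
  have hc_uu := cost_integrand_integrableOn hWmeas CW hCW hΔu hEucont hsub
  have hc_vv := cost_integrand_integrableOn hWmeas CW hCW hΔv hEvcont hsub
  have hc_uv := cost_integrand_integrableOn hWmeas CW hCW hΔu hEvcont hsub
  have hc_vu := cost_integrand_integrableOn hWmeas CW hCW hΔv hEucont hsub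
  -- additivity of the endpoint map
  have hepadd : ∀ s ∈ Icc t0 t1,
      epMap k m A t0 s (Δu + Δv) = epMap k m A t0 s Δu + epMap k m A t0 s Δv :=
    fun s hs => epMap_add (hfu (hsub' s hs)) (hfv (hsub' s hs)) hs.1
  -- the cost splits
  have hcostsum : cost k m A W t0 t (Δu + Δv)
      = cost k m A W t0 t Δu + cost k m A W t0 t Δv
        + ((∫ s in Ioc t0 t,
              dotProduct (Δu s) ((W s).mulVec (epMap k m A t0 s Δv)))
          + ∫ s in Ioc t0 t,
              dotProduct (Δv s) ((W s).mulVec (epMap k m A t0 s Δu))) := by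
    have A12 : IntegrableOn (fun s =>
        dotProduct (Δu s) ((W s).mulVec (epMap k m A t0 s Δu))
          + dotProduct (Δv s) ((W s).mulVec (epMap k m A t0 s Δv)))
        (Ioc t0 t) := hc_uu.add hc_vv
    have A34 : IntegrableOn (fun s =>
        dotProduct (Δu s) ((W s).mulVec (epMap k m A t0 s Δv))
          + dotProduct (Δv s) ((W s).mulVec (epMap k m A t0 s Δu)))
        (Ioc t0 t) := hc_uv.add hc_vu
    have hpt : EqOn
        (fun s => dotProduct ((Δu + Δv) s)
          ((W s).mulVec (epMap k m A t0 s (Δu + Δv))))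
        (fun s =>
          (dotProduct (Δu s) ((W s).mulVec (epMap k m A t0 s Δu))
            + dotProduct (Δv s) ((W s).mulVec (epMap k m A t0 s Δv)))
          + (dotProduct (Δu s) ((W s).mulVec (epMap k m A t0 s Δv))
            + dotProduct (Δv s) ((W s).mulVec (epMap k m A t0 s Δu))))
        (Ioc t0 t) := by
      intro s hs
      dsimp only
      rw [hepadd s (hsub hs)]
      simp only [Pi.add_apply, Matrix.mulVec_add, add_dotProduct,
        dotProduct_add]
      ring
    rw [cost_eq_setIntegral ht0, cost_eq_setIntegral ht0, cost_eq_setIntegral ht0,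
      setIntegral_congr_fun measurableSet_Ioc hpt,
      integral_add A12 A34, integral_add hc_uu hc_vv, integral_add hc_uv hc_vu]
  -- componentwise formulas
  have hEvj : ∀ s, t0 ≤ s → s ≤ t1 → ∀ j, epMap k m A t0 s Δv j
      = ∫ r in Ioc t0 s, (A r).mulVec (Δv r) j :=
    fun s h1 h2 j => ep_apply h1 (hfv (hsub' s ⟨h1, h2⟩)) j
  have hψj : ∀ s, t0 ≤ s → s ≤ t1 → ∀ j, ψ s j
      = ψ1 j + ∫ r in Ioc t0 s, (W r).transpose.mulVec (Δu r) j := by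
    intro s h1 h2 j
    rw [hψ s, Pi.add_apply]
    congr 1
    rw [intervalIntegral.integral_of_le h1]
    exact integral_pi_apply (hguv (hsub' s ⟨h1, h2⟩)) j
  -- the key cross-term computation
  have key : (∫ s in Ioc t0 t,
        dotProduct (Δu s) ((W s).mulVec (epMap k m A t0 s Δv)))
      + (∫ s in Ioc t0 t,
        dotProduct (Δv s) ((W s).mulVec (epMap k m A t0 s Δu)))
      = dotProduct (epMap k m A t0 t Δv) (ψ t) := by
    have hA1 : ∫ s in Ioc t0 t,
        dotProduct (Δu s) ((W s).mulVec (epMap k m A t0 s Δv))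
        = ∫ s in Ioc t0 t, ∑ j, (W s).transpose.mulVec (Δu s) j
            * ∫ r in Ioc t0 s, (A r).mulVec (Δv r) j := by
      apply setIntegral_congr_fun measurableSet_Ioc
      intro s hs
      dsimp only
      rw [Matrix.dotProduct_mulVec, ← Matrix.mulVec_transpose]
      simp only [dotProduct]
      exact Finset.sum_congr rfl fun j _ => by
        rw [hEvj s hs.1.le (hs.2.trans ht.2) j]
    have hA2 : ∫ s in Ioc t0 t,
        dotProduct (Δv s) ((W s).mulVec (epMap k m A t0 s Δu))
        = ∫ s in Ioc t0 t, ∑ j, ((A s).mulVec (Δv s) j * ψ1 j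
            + (A s).mulVec (Δv s) j
              * ∫ r in Ioc t0 s, (W r).transpose.mulVec (Δu r) j) := by
      apply integral_congr_ae
      refine (ae_restrict_iff' measurableSet_Ioc).2 ?_
      filter_upwards [hmax] with s hsmax hs
      rw [← hsmax (hsub hs), Matrix.dotProduct_mulVec, Matrix.vecMul_transpose]
      simp only [dotProduct]
      refine Finset.sum_congr rfl fun j _ => ?_
      rw [hψj s hs.1.le (hs.2.trans ht.2) j]
      ring
    rw [hA1, hA2, integral_finset_sum, integral_finset_sum]
    · have hRHS : dotProduct (epMap k m A t0 t Δv) (ψ t)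
          = ∑ j, (∫ r in Ioc t0 t, (A r).mulVec (Δv r) j)
              * (ψ1 j + ∫ r in Ioc t0 t, (W r).transpose.mulVec (Δu r) j) := by
        simp only [dotProduct]
        exact Finset.sum_congr rfl fun j _ => by
          rw [hEvj t ht0 ht.2 j, hψj t ht0 ht.2 j]
      rw [hRHS, ← Finset.sum_add_distrib]
      refine Finset.sum_congr rfl fun j _ => ?_
      rw [integral_add ((integrable_pi_apply (hfv hsub) j).mul_const _)
        (integrableOn_mul_primitive (integrable_pi_apply (hfv hsub) j)
          (integrable_pi_apply (hguv hsub) j))]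
      have hkey := integral_mul_primitive_add
        (integrable_pi_apply (hfv hsub) j) (integrable_pi_apply (hguv hsub) j)
      have hc : ∫ s in Ioc t0 t, (A s).mulVec (Δv s) j * ψ1 j
          = (∫ s in Ioc t0 t, (A s).mulVec (Δv s) j) * ψ1 j :=
        integral_mul_const _ _
      nlinarith [hkey, hc]
    · intro j _
      exact ((integrable_pi_apply (hfv hsub) j).mul_const _).add
        (integrableOn_mul_primitive (integrable_pi_apply (hfv hsub) j)
          (integrable_pi_apply (hguv hsub) j))
    · intro j _
      exact integrableOn_mul_primitive (integrable_pi_apply (hguv hsub) j)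
        (integrable_pi_apply (hfv hsub) j)
  linarith [hcostsum, key]

/-- **Proposition 4.20 together with Lemma 4.22 (i), sufficiency.** Normal
Pontryagin extremals of the characteristic optimal control problem are its
solutions. Let `ψ(t) = ψ1 + ∫_{t0}^t W(s)ᵀ·Δu(s) ds` be the adjoint curve and
assume the maximum condition `A(t)ᵀ·ψ(t) = W(t)·E(t,Δu)` a.e. on `[t0,t1]`.
Then (a) for every control `Δv` and `t ∈ [t0,t1]`,
`C(t,Δu+Δv) − C(t,Δu) − C(t,Δv) = ⟨E(t,Δv), ψ(t)⟩`; and (b) if for some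
`t ∈ [t0,t1]` the cost set over `0` is bounded below, then `Δu` minimizes the
cost among controls with the same endpoint at time `t`. -/
theorem normal_extremal_is_solution
    (t0 t1 : ℝ) (ht : t0 < t1) (k m : ℕ)
    (A : ℝ → Matrix (Fin m) (Fin k) ℝ)
    (hAmeas : ∀ i j, Measurable fun t => A t i j)
    (hAbdd : ∃ C : ℝ, ∀ t ∈ Set.Icc t0 t1, ∀ i j, |A t i j| ≤ C)
    (W : ℝ → Matrix (Fin k) (Fin m) ℝ)
    (hWmeas : ∀ i j, Measurable fun t => W t i j)
    (hWbdd : ∃ C : ℝ, ∀ t ∈ Set.Icc t0 t1, ∀ i j, |W t i j| ≤ C)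
    (Δu : ℝ → Fin k → ℝ) (hΔu : IsControl k Δu)
    (ψ1 : Fin m → ℝ) (ψ : ℝ → Fin m → ℝ)
    (hψ : ∀ t : ℝ, ψ t = ψ1 + ∫ s in t0..t, (W s).transpose.mulVec (Δu s))
    (hmax : ∀ᵐ t : ℝ, t ∈ Set.Icc t0 t1 →
      (A t).transpose.mulVec (ψ t) = (W t).mulVec (epMap k m A t0 t Δu)) :
    (∀ Δv : ℝ → Fin k → ℝ, IsControl k Δv → ∀ t ∈ Set.Icc t0 t1,
      cost k m A W t0 t (Δu + Δv) - cost k m A W t0 t Δu -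
          cost k m A W t0 t Δv
        = dotProduct (epMap k m A t0 t Δv) (ψ t)) ∧
    (∀ t ∈ Set.Icc t0 t1, BddBelow (costSet k m A W t0 t 0) →
      ∀ w : ℝ → Fin k → ℝ, IsControl k w →
        epMap k m A t0 t w = epMap k m A t0 t Δu →
        cost k m A W t0 t Δu ≤ cost k m A W t0 t w) := by
  obtain ⟨CA, hCA⟩ := hAbdd
  obtain ⟨CW, hCW⟩ := hWbdd
  have parta : ∀ Δv : ℝ → Fin k → ℝ, IsControl k Δv → ∀ t ∈ Set.Icc t0 t1,
      cost k m A W t0 t (Δu + Δv) - cost k m A W t0 t Δu - cost k m A W t0 t Δv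
        = dotProduct (epMap k m A t0 t Δv) (ψ t) :=
    fun Δv hΔv t htt =>
      cross_identity t0 t1 k m A hAmeas CA hCA W hWmeas CW hCW Δu hΔu ψ1 ψ hψ hmax Δv hΔv t htt
  refine ⟨parta, ?_⟩
  intro t htt hbdd w hw hep
  set Δv : ℝ → Fin k → ℝ := w - Δu with hΔvdef
  have hΔv : IsControl k Δv := hw.sub' hΔu
  have huv : Δu + Δv = w := by rw [hΔvdef]; abel
  have hsubI : Ioc t0 t ⊆ Icc t0 t1 := fun s hs => ⟨hs.1.le, hs.2.trans htt.2⟩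
  have hfu := mulVec_ctrl_integrableOn A hAmeas CA hCA Δu hΔu hsubI
  have hfv := mulVec_ctrl_integrableOn A hAmeas CA hCA Δv hΔv hsubI
  have hadd : epMap k m A t0 t (Δu + Δv) = epMap k m A t0 t Δu + epMap k m A t0 t Δv :=
    epMap_add hfu hfv htt.1
  have h2 : epMap k m A t0 t Δu + epMap k m A t0 t Δv = epMap k m A t0 t Δu := by
    rw [← hadd, huv, hep]
  have hEv0 : epMap k m A t0 t Δv = 0 := add_eq_left.1 h2
  have hpa := parta Δv hΔv t htt
  rw [huv, hEv0, zero_dotProduct] at hpa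
  have hnonneg : 0 ≤ cost k m A W t0 t Δv := by
    by_contra hneg
    push_neg at hneg
    obtain ⟨b, hb⟩ := hbdd
    have hmem : ∀ n : ℕ, ((n : ℝ) ^ 2 * cost k m A W t0 t Δv) ∈ costSet k m A W t0 t 0 := by
      intro n
      exact ⟨(n : ℝ) • Δv, IsControl.smul' _ hΔv,
        by rw [epMap_smul, hEv0, smul_zero], cost_smul _ _⟩
    obtain ⟨n, hn⟩ := exists_nat_gt (max 1 ((-b) / (-(cost k m A W t0 t Δv))))
    have hn1 : (1 : ℝ) ≤ n := le_of_lt (lt_of_le_of_lt (le_max_left _ _) hn)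
    have hb' : b ≤ (n : ℝ) ^ 2 * cost k m A W t0 t Δv := hb (hmem n)
    have h3 : (-b) / (-(cost k m A W t0 t Δv)) < n :=
      lt_of_le_of_lt (le_max_right _ _) hn
    have h4 : -b < (n : ℝ) * (-(cost k m A W t0 t Δv)) :=
      (div_lt_iff₀ (by linarith)).1 h3
    have h5 : 0 ≤ (n : ℝ) ^ 2 - n := by nlinarith [hn1]
    nlinarith [h5, hb', h4, hneg]
  linarith
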